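/- arXiv:2112.06997 — 4 statements merged into one kernel-verified Lean document; each statement's English description precedes it below -/
import Mathlib

section
/- For all x ∈ ℝ and w₂ ∈ ℝ, w₁ > 0, b ∈ ℝ, the pointwise limit as w₁ → ∞ of (w₂/w₁)·FELU(w₁·(x + b)) equals w₂·ReLU(x + b). -/
noncomputable def FELU (x : ℝ) : ℝ :=
  if x > 0 then x else if -1 ≤ x then (x + 1) ^ 2 / 2 - 1 / 2 else -(1 / 2)

theorem felu_relu_limit (x b w₂ : ℝ) :
    Filter.Tendsto (fun w₁ : ℝ => (w₂ / w₁) * FELU (w₁ * (x + b)))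
      Filter.atTop (nhds (w₂ * max (x + b) 0)) := by
  set t := x + b with ht
  rcases lt_trichotomy t 0 with h | h | h
  · rw [max_eq_right h.le, mul_zero]
    have key : (fun w₁ : ℝ => (w₂ / w₁) * FELU (w₁ * t)) =ᶠ[Filter.atTop]
        (fun w₁ : ℝ => (w₂ / w₁) * (-(1 / 2))) := by
      filter_upwards [Filter.eventually_ge_atTop (-2 / t)] with w hw
      have h2 : w * t ≤ -2 := by
        have := mul_le_mul_of_nonpos_right hw h.le
        rwa [div_mul_cancel₀ _ h.ne] at this
      have hwt : w * t < -1 := by linarith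
      simp only [FELU]
      rw [if_neg (by linarith), if_neg (by linarith)]
    refine Filter.Tendsto.congr' key.symm ?_
    have h0 : Filter.Tendsto (fun w₁ : ℝ => w₂ / w₁) Filter.atTop (nhds 0) :=
      Filter.Tendsto.const_div_atTop Filter.tendsto_id w₂
    have h1 := h0.mul_const (-(1/2))
    rwa [zero_mul] at h1
  · rw [h, max_self, mul_zero]
    have : (fun w₁ : ℝ => (w₂ / w₁) * FELU (w₁ * 0)) = fun _ => 0 := by
      funext w
      simp [FELU]
    rw [this]
    exact tendsto_const_nhds
  · rw [max_eq_left h.le]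
    have key : (fun w₁ : ℝ => (w₂ / w₁) * FELU (w₁ * t)) =ᶠ[Filter.atTop]
        (fun _ : ℝ => w₂ * t) := by
      filter_upwards [Filter.eventually_gt_atTop 0] with w hw
      have hwt : 0 < w * t := mul_pos hw h
      simp only [FELU, if_pos hwt]
      field_simp
    exact Filter.Tendsto.congr' key.symm tendsto_const_nhds
end

section
/- If g : ℝᵈ → ℝᵈ is continuously differentiable and L-Lipschitz with L < 1, and f(x) = x + g(x), then for every x, d·log(1 - L) ≤ log|det(Jf(x))| ≤ d·log(1 + L), where Jf(x) is the Jacobian of f at x. -/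
open MeasureTheory Metric

/-- The determinant of a continuous linear map on `EuclideanSpace ℝ (Fin d)` is bounded
by the `d`-th power of its operator norm. -/
lemma abs_det_le_norm_pow {d : ℕ}
    (T : EuclideanSpace ℝ (Fin d) →L[ℝ] EuclideanSpace ℝ (Fin d)) :
    |T.det| ≤ ‖T‖ ^ d := by
  have hfin : Module.finrank ℝ (EuclideanSpace ℝ (Fin d)) = d := finrank_euclideanSpace_fin
  have h1 : (volume : Measure (EuclideanSpace ℝ (Fin d))) (T '' ball 0 1)
      = ENNReal.ofReal |T.det| * volume (ball (0 : EuclideanSpace ℝ (Fin d)) 1) := by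
    simpa using Measure.addHaar_image_continuousLinearMap
      (volume : Measure (EuclideanSpace ℝ (Fin d))) T (ball 0 1)
  have hsub : T '' ball 0 1 ⊆ closedBall (0 : EuclideanSpace ℝ (Fin d)) ‖T‖ := by
    rintro _ ⟨y, hy, rfl⟩
    simp only [mem_ball, dist_zero_right] at hy
    simp only [mem_closedBall, dist_zero_right]
    calc ‖T y‖ ≤ ‖T‖ * ‖y‖ := T.le_opNorm y
      _ ≤ ‖T‖ * 1 := mul_le_mul_of_nonneg_left hy.le (norm_nonneg T)
      _ = ‖T‖ := mul_one _
  have h2 : (volume : Measure (EuclideanSpace ℝ (Fin d)))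
        (closedBall (0 : EuclideanSpace ℝ (Fin d)) ‖T‖)
      = ENNReal.ofReal (‖T‖ ^ d) * volume (ball (0 : EuclideanSpace ℝ (Fin d)) 1) := by
    rw [Measure.addHaar_closedBall _ _ (norm_nonneg T), hfin]
  have hle : ENNReal.ofReal |T.det| * volume (ball (0 : EuclideanSpace ℝ (Fin d)) 1)
      ≤ ENNReal.ofReal (‖T‖ ^ d) * volume (ball (0 : EuclideanSpace ℝ (Fin d)) 1) := by
    rw [← h1, ← h2]
    exact measure_mono hsub
  have hpos : volume (ball (0 : EuclideanSpace ℝ (Fin d)) 1) ≠ 0 :=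
    (measure_ball_pos volume (0 : EuclideanSpace ℝ (Fin d)) one_pos).ne'
  have hfinm : volume (ball (0 : EuclideanSpace ℝ (Fin d)) 1) ≠ ⊤ := measure_ball_lt_top.ne
  have := (ENNReal.mul_le_mul_iff_left hpos hfinm).mp hle
  rwa [ENNReal.ofReal_le_ofReal_iff (pow_nonneg (norm_nonneg T) d)] at this

/-- Norm bound for the inverse of `1 - t` when `‖t‖ < 1` (geometric series). -/
lemma norm_oneSub_inv_le {R : Type*} [NormedRing R] [CompleteSpace R]
    (t : R) (h : ‖t‖ < 1) (h1 : ‖(1 : R)‖ ≤ 1) :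
    ‖((Units.oneSub t h)⁻¹ : Rˣ).val‖ ≤ (1 - ‖t‖)⁻¹ := by
  have hval : ((Units.oneSub t h)⁻¹ : Rˣ).val = ∑' n : ℕ, t ^ n := rfl
  rw [hval]
  have hs : Summable fun n : ℕ => ‖t‖ ^ n :=
    summable_geometric_of_lt_one (norm_nonneg t) h
  have hbound : ∀ n : ℕ, ‖t ^ n‖ ≤ ‖t‖ ^ n := by
    intro n
    rcases Nat.eq_zero_or_pos n with rfl | hn
    · simpa using h1
    · exact norm_pow_le' t hn
  have hsum : Summable fun n : ℕ => ‖t ^ n‖ :=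
    Summable.of_nonneg_of_le (fun n => norm_nonneg _) hbound hs
  calc ‖∑' n : ℕ, t ^ n‖ ≤ ∑' n : ℕ, ‖t ^ n‖ := norm_tsum_le_tsum_norm hsum
    _ ≤ ∑' n : ℕ, ‖t‖ ^ n := Summable.tsum_le_tsum hbound hsum hs
    _ = (1 - ‖t‖)⁻¹ := tsum_geometric_of_lt_one (norm_nonneg t) h

theorem residual_logdet_bounds {d : ℕ}
    (g : EuclideanSpace ℝ (Fin d) → EuclideanSpace ℝ (Fin d))
    (L : ℝ) (hL1 : L < 1)
    (hgC1 : ContDiff ℝ 1 g)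
    (hg : ∀ a b, ‖g a - g b‖ ≤ L * ‖a - b‖) :
    ∀ x, (d : ℝ) * Real.log (1 - L) ≤
        Real.log |(fderiv ℝ (fun x => x + g x) x).det| ∧
      Real.log |(fderiv ℝ (fun x => x + g x) x).det| ≤ (d : ℝ) * Real.log (1 + L) := by
  intro x
  rcases Nat.eq_zero_or_pos d with rfl | hd
  · -- trivial case d = 0
    have hdet : (fderiv ℝ (fun x => x + g x) x).det = 1 := by
      apply LinearMap.det_eq_one_of_finrank_eq_zero
      simp [finrank_euclideanSpace_fin]
    rw [hdet]
    simp
  -- now d ≥ 1, so L ≥ 0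
  have hL0 : 0 ≤ L := by
    by_contra hneg
    push_neg at hneg
    set a : EuclideanSpace ℝ (Fin d) := EuclideanSpace.single (⟨0, hd⟩ : Fin d) (1 : ℝ) with ha
    have hna : ‖a - 0‖ = 1 := by
      rw [sub_zero, ha, EuclideanSpace.norm_single, norm_one]
    have := hg a 0
    rw [hna, mul_one] at this
    exact absurd (lt_of_le_of_lt this hneg) (not_lt.mpr (norm_nonneg _))
  -- Lipschitz bound on the derivative of g
  have hlip : LipschitzWith ⟨L, hL0⟩ g := by
    apply LipschitzWith.of_dist_le_mul
    intro a b
    rw [dist_eq_norm, dist_eq_norm]; exact hg a b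
  set A : EuclideanSpace ℝ (Fin d) →L[ℝ] EuclideanSpace ℝ (Fin d) := fderiv ℝ g x with hA
  have hAnorm : ‖A‖ ≤ L := norm_fderiv_le_of_lipschitz ℝ hlip
  have hgdiff : DifferentiableAt ℝ g x := (hgC1.differentiable one_ne_zero) x
  -- compute the derivative of f
  have hfder : fderiv ℝ (fun x => x + g x) x
      = ContinuousLinearMap.id ℝ (EuclideanSpace ℝ (Fin d)) + A :=
    ((hasFDerivAt_id x).add hgdiff.hasFDerivAt).fderiv
  set T : EuclideanSpace ℝ (Fin d) →L[ℝ] EuclideanSpace ℝ (Fin d) :=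
    ContinuousLinearMap.id ℝ (EuclideanSpace ℝ (Fin d)) + A with hT
  rw [hfder]
  have hTeq : T = 1 - (-A) := by rw [sub_neg_eq_add]; rfl
  have hnA : ‖-A‖ < 1 := by rw [norm_neg]; exact lt_of_le_of_lt hAnorm hL1
  -- T is a unit
  set u : (EuclideanSpace ℝ (Fin d) →L[ℝ] EuclideanSpace ℝ (Fin d))ˣ :=
    Units.oneSub (-A) hnA with hu
  have huval : u.val = T := by rw [hu, Units.val_oneSub, ← hTeq]
  set S : EuclideanSpace ℝ (Fin d) →L[ℝ] EuclideanSpace ℝ (Fin d) := (u⁻¹).val with hS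
  -- upper bound on ‖T‖
  have hTnorm : ‖T‖ ≤ 1 + L := by
    calc ‖T‖ ≤ ‖ContinuousLinearMap.id ℝ (EuclideanSpace ℝ (Fin d))‖ + ‖A‖ := norm_add_le _ _
      _ ≤ 1 + L := add_le_add ContinuousLinearMap.norm_id_le hAnorm
  have hone : ‖(1 : EuclideanSpace ℝ (Fin d) →L[ℝ] EuclideanSpace ℝ (Fin d))‖ ≤ 1 :=
    ContinuousLinearMap.norm_id_le
  have h1L : (0 : ℝ) < 1 - L := by linarith
  have h1L' : (0 : ℝ) < 1 + L := by linarith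
  have hinvnorm : ‖S‖ ≤ (1 - L)⁻¹ := by
    refine (norm_oneSub_inv_le (-A) hnA hone).trans ?_
    apply inv_anti₀ h1L
    rw [norm_neg]; linarith
  -- determinant multiplicativity: det T * det S = 1
  have hdetmul : T.det * S.det = 1 := by
    have hmul : u.val * S = 1 := u.mul_inv
    have h2 : ContinuousLinearMap.det (u.val * S) = 1 := by
      rw [hmul]
      show LinearMap.det _ = 1
      rw [ContinuousLinearMap.one_def, ContinuousLinearMap.coe_id]
      exact LinearMap.det_id
    rw [← h2, huval]
    show LinearMap.det _ * LinearMap.det _ = LinearMap.det _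
    rw [show ((T * S : EuclideanSpace ℝ (Fin d) →L[ℝ] EuclideanSpace ℝ (Fin d)) :
        EuclideanSpace ℝ (Fin d) →ₗ[ℝ] EuclideanSpace ℝ (Fin d))
      = (T : EuclideanSpace ℝ (Fin d) →ₗ[ℝ] EuclideanSpace ℝ (Fin d)).comp
        (S : EuclideanSpace ℝ (Fin d) →ₗ[ℝ] EuclideanSpace ℝ (Fin d)) from rfl]
    exact (LinearMap.det_comp _ _).symm
  -- upper bound for |det T|
  have hup : |T.det| ≤ (1 + L) ^ d := by
    calc |T.det| ≤ ‖T‖ ^ d := abs_det_le_norm_pow T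
      _ ≤ (1 + L) ^ d := pow_le_pow_left₀ (norm_nonneg T) hTnorm d
  -- lower bound for |det T|
  have hdetinv : |S.det| ≤ ((1 - L) ^ d)⁻¹ := by
    rw [← inv_pow]
    calc |S.det| ≤ ‖S‖ ^ d := abs_det_le_norm_pow _
      _ ≤ ((1 - L)⁻¹) ^ d := pow_le_pow_left₀ (norm_nonneg _) hinvnorm d
  have hdetinv_pos : 0 < |S.det| := by
    rcases eq_or_ne S.det 0 with h0 | h0
    · exfalso
      rw [h0, mul_zero] at hdetmul
      exact one_ne_zero hdetmul.symm
    · exact abs_pos.mpr h0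
  have hTd : |T.det| = |S.det|⁻¹ :=
    eq_inv_of_mul_eq_one_right (by rw [← abs_mul, mul_comm S.det T.det, hdetmul, abs_one])
  have hlow : (1 - L) ^ d ≤ |T.det| := by
    rw [hTd]
    calc (1 - L) ^ d = (((1 - L) ^ d)⁻¹)⁻¹ := (inv_inv _).symm
      _ ≤ |S.det|⁻¹ := inv_anti₀ hdetinv_pos hdetinv
  have hTdet_pos : 0 < |T.det| := lt_of_lt_of_le (pow_pos h1L d) hlow
  constructor
  · calc (d : ℝ) * Real.log (1 - L) = Real.log ((1 - L) ^ d) := by rw [Real.log_pow]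
      _ ≤ Real.log |T.det| := Real.log_le_log (pow_pos h1L d) hlow
  · calc Real.log |T.det| ≤ Real.log ((1 + L) ^ d) := Real.log_le_log hTdet_pos hup
      _ = (d : ℝ) * Real.log (1 + L) := by rw [Real.log_pow]
end

section
/- Let f : ℝ → ℝ be 1-Lipschitz and let [a,b] be a compact interval. For every ε > 0 there exist H ∈ ℕ, weights w ∈ ℝ^H, biases b₁ ∈ ℝ^H, and b₂ ∈ ℝ such that the function ĥ(x) = b₂ + Σᵢ wᵢ·ReLU(x + b₁ᵢ) is 1-Lipschitz and satisfies sup_{x ∈ [a,b]} |f(x) - ĥ(x)| ≤ ε. -/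
lemma aux_ramp_add (u c h : ℝ) (hc : 0 ≤ c) (hh : 0 ≤ h) :
    min (max u 0) c + min (max (u - c) 0) h = min (max u 0) (c + h) := by
  rcases le_total u 0 with h1 | h1 <;> rcases le_total u c with h2 | h2 <;>
    rcases le_total u (c + h) with h3 | h3 <;>
    simp only [min_def, max_def] <;> split_ifs <;> linarith

lemma aux_relu_sub (u h : ℝ) (hh : 0 ≤ h) :
    max u 0 - max (u - h) 0 = min (max u 0) h := by
  rcases le_total u 0 with h1 | h1 <;> rcases le_total u h with h2 | h2 <;>
    simp only [min_def, max_def] <;> split_ifs <;> linarith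

lemma sum_ramp (a h : ℝ) (hh : 0 ≤ h) (n : ℕ) (t : ℝ) :
    ∑ i : Fin n, min (max (t - (a + (i : ℝ) * h)) 0) h = min (max (t - a) 0) ((n : ℝ) * h) := by
  induction n with
  | zero => simp only [Finset.univ_eq_empty, Finset.sum_empty, Nat.cast_zero, zero_mul]
            rw [min_eq_right (le_max_right _ _)]
  | succ n ih =>
    rw [Fin.sum_univ_castSucc]
    simp only [Fin.coe_castSucc, Fin.val_last]
    rw [ih]
    have := aux_ramp_add (t - a) ((n : ℝ) * h) h (by positivity) hh
    push_cast
    have heq : t - (a + (n:ℝ) * h) = (t - a) - (n:ℝ)*h := by ring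
    rw [heq, this]
    ring_nf

lemma g_lipschitz (a h : ℝ) (hh : 0 ≤ h) (n : ℕ) (s : ℕ → ℝ) (hs : ∀ i, |s i| ≤ 1) (c : ℝ) :
    LipschitzWith 1 (fun t => c + ∑ i : Fin n, s i * min (max (t - (a + (i : ℝ) * h)) 0) h) := by
  have key : ∀ x y : ℝ, x ≤ y →
      |(c + ∑ i : Fin n, s i * min (max (y - (a + (i : ℝ) * h)) 0) h) -
        (c + ∑ i : Fin n, s i * min (max (x - (a + (i : ℝ) * h)) 0) h)| ≤ y - x := by
    intro x y hxy
    have hdiff : (c + ∑ i : Fin n, s i * min (max (y - (a + (i : ℝ) * h)) 0) h) -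
        (c + ∑ i : Fin n, s i * min (max (x - (a + (i : ℝ) * h)) 0) h) =
        ∑ i : Fin n, s i * (min (max (y - (a + (i : ℝ) * h)) 0) h -
          min (max (x - (a + (i : ℝ) * h)) 0) h) := by
      simp only [mul_sub, Finset.sum_sub_distrib]; ring
    rw [hdiff]
    have hd0 : ∀ i : Fin n, 0 ≤ min (max (y - (a + (i : ℝ) * h)) 0) h -
        min (max (x - (a + (i : ℝ) * h)) 0) h := by
      intro i
      have : min (max (x - (a + (i : ℝ) * h)) 0) h ≤ min (max (y - (a + (i : ℝ) * h)) 0) h := by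
        apply min_le_min _ le_rfl
        exact max_le_max (by linarith) le_rfl
      linarith
    calc |∑ i : Fin n, s i * (min (max (y - (a + (i : ℝ) * h)) 0) h -
          min (max (x - (a + (i : ℝ) * h)) 0) h)|
        ≤ ∑ i : Fin n, |s i * (min (max (y - (a + (i : ℝ) * h)) 0) h -
          min (max (x - (a + (i : ℝ) * h)) 0) h)| := Finset.abs_sum_le_sum_abs _ _
      _ ≤ ∑ i : Fin n, (min (max (y - (a + (i : ℝ) * h)) 0) h -
          min (max (x - (a + (i : ℝ) * h)) 0) h) := by
          apply Finset.sum_le_sum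
          intro i _
          rw [abs_mul, abs_of_nonneg (hd0 i)]
          nlinarith [hs i, hd0 i, abs_nonneg (s i)]
      _ = min (max (y - a) 0) ((n : ℝ) * h) - min (max (x - a) 0) ((n : ℝ) * h) := by
          rw [Finset.sum_sub_distrib, sum_ramp a h hh, sum_ramp a h hh]
      _ ≤ y - x := by
          rcases le_total (x-a) 0 with h1 | h1 <;> rcases le_total (y-a) ((n:ℝ)*h) with h2 | h2 <;>
            simp only [min_def, max_def] <;> split_ifs <;>
            first | linarith | nlinarith [hh, Nat.cast_nonneg (α := ℝ) n]
  rw [lipschitzWith_iff_dist_le_mul]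
  intro x y
  simp only [Real.dist_eq, NNReal.coe_one, one_mul]
  rcases le_total x y with hxy | hxy
  · rw [abs_sub_comm]
    calc _ ≤ y - x := key x y hxy
      _ ≤ |x - y| := by rw [abs_sub_comm]; exact le_abs_self _
  · calc _ ≤ x - y := key y x hxy
      _ ≤ |x - y| := le_abs_self _

lemma g_interp (a h : ℝ) (hh : 0 < h) (n : ℕ) (f : ℝ → ℝ) (j : ℕ) (hj : j ≤ n) :
    f a + ∑ i : Fin n, ((f (a + ((i:ℝ)+1)*h) - f (a + (i:ℝ)*h))/h) *
      min (max ((a + (j:ℝ)*h) - (a + (i:ℝ)*h)) 0) h = f (a + (j:ℝ)*h) := by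
  have hterm : ∀ i : Fin n, ((f (a + ((i:ℝ)+1)*h) - f (a + (i:ℝ)*h))/h) *
      min (max ((a + (j:ℝ)*h) - (a + (i:ℝ)*h)) 0) h =
      if (i:ℕ) < j then f (a + ((i:ℝ)+1)*h) - f (a + (i:ℝ)*h) else 0 := by
    intro i
    rcases lt_or_ge (i:ℕ) j with hij | hij
    · have h1 : (1:ℝ) ≤ (j:ℝ) - (i:ℝ) := by
        have : (i:ℕ) + 1 ≤ j := hij
        have := (Nat.cast_le (α := ℝ)).mpr this
        push_cast at this; linarith
      have heq : (a + (j:ℝ)*h) - (a + (i:ℝ)*h) = ((j:ℝ)-(i:ℝ))*h := by ring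
      rw [heq, max_eq_left (by nlinarith), min_eq_right (by nlinarith), if_pos hij,
        div_mul_cancel₀ _ hh.ne']
    · have hji : (j:ℝ) ≤ (i:ℝ) := by exact_mod_cast hij
      have hle : (a + (j:ℝ)*h) - (a + (i:ℝ)*h) ≤ 0 := by nlinarith
      rw [max_eq_right hle, min_eq_left hh.le, if_neg (Nat.not_lt.mpr hij), mul_zero]
  rw [Finset.sum_congr rfl (fun i _ => hterm i)]
  have : ∑ i : Fin n, (if (i:ℕ) < j then f (a + ((i:ℝ)+1)*h) - f (a + (i:ℝ)*h) else 0) =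
      ∑ i ∈ Finset.range n, (if i < j then f (a + ((i:ℝ)+1)*h) - f (a + (i:ℝ)*h) else 0) :=
    Fin.sum_univ_eq_sum_range (fun i : ℕ => if i < j then f (a + ((i:ℝ)+1)*h) - f (a + (i:ℝ)*h) else 0) n
  rw [this, ← Finset.sum_subset (Finset.range_subset_range.mpr hj)
    (fun x _ hx => if_neg (fun hlt => hx (Finset.mem_range.mpr hlt)))]
  rw [Finset.sum_congr rfl (fun i hi => if_pos (Finset.mem_range.mp hi))]
  have := Finset.sum_range_sub (fun i : ℕ => f (a + (i:ℝ)*h)) j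
  push_cast at this
  rw [this]
  ring_nf

theorem relu_universal_lipschitz (f : ℝ → ℝ) (hf : LipschitzWith 1 f) (a b : ℝ) (hab : a ≤ b) :
    ∀ ε > (0 : ℝ), ∃ (H : ℕ) (w b₁ : Fin H → ℝ) (b₂ : ℝ),
      LipschitzWith 1 (fun x => b₂ + ∑ i, w i * max (x + b₁ i) 0) ∧
      ∀ x ∈ Set.Icc a b, |f x - (b₂ + ∑ i, w i * max (x + b₁ i) 0)| ≤ ε := by
  intro ε hε
  rcases eq_or_lt_of_le hab with heq | hlt
  · -- degenerate case a = b
    refine ⟨0, (fun _ => 0), (fun _ => 0), f a, ?_, ?_⟩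
    · have hconst : (fun x : ℝ => f a + ∑ i : Fin 0, (0:ℝ) * max (x + 0) 0) = fun _ => f a := by
        funext x; simp
      rw [hconst]
      exact (LipschitzWith.const (f a)).weaken zero_le_one
    · intro x hx
      rw [← heq] at hx
      have hxa : x = a := le_antisymm hx.2 hx.1
      simp only [hxa, Finset.univ_eq_empty, Finset.sum_empty, add_zero, sub_self, abs_zero]
      linarith
  · -- main case a < b
    obtain ⟨n, hn⟩ := exists_nat_gt (2*(b-a)/ε)
    have hn0 : (0:ℝ) < n := lt_of_le_of_lt (div_nonneg (by linarith) hε.le) hn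
    set h : ℝ := (b-a)/n with hdef
    have hh : 0 < h := by rw [hdef]; exact div_pos (by linarith) hn0
    have h2eps : 2*h ≤ ε := by
      have h2 : 2*(b-a) < (n:ℝ)*ε := (div_lt_iff₀ hε).mp hn
      rw [hdef]
      rw [show 2*((b-a)/n) = (2*(b-a))/n by ring, div_le_iff₀ hn0]
      nlinarith
    set s : ℕ → ℝ := fun i => (f (a + ((i:ℝ)+1)*h) - f (a + (i:ℝ)*h))/h with hsdef
    have hs1 : ∀ i, |s i| ≤ 1 := by
      intro i
      have hd := hf.dist_le_mul (a + ((i:ℝ)+1)*h) (a + (i:ℝ)*h)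
      rw [Real.dist_eq, Real.dist_eq, NNReal.coe_one, one_mul] at hd
      have habs : |a + ((i:ℝ)+1)*h - (a + (i:ℝ)*h)| = h := by
        rw [show a + ((i:ℝ)+1)*h - (a + (i:ℝ)*h) = h by ring, abs_of_pos hh]
      rw [habs] at hd
      rw [hsdef]
      simp only [abs_div, abs_of_pos hh]
      rw [div_le_one hh]
      exact hd
    set W : Fin n × Fin 2 → ℝ := fun p => if p.2 = 0 then s p.1 else -(s p.1) with hWdef
    set B : Fin n × Fin 2 → ℝ := fun p => if p.2 = 0 then -(a + (p.1:ℝ)*h) else -(a + ((p.1:ℝ)+1)*h)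
      with hBdef
    refine ⟨n*2, fun j => W (finProdFinEquiv.symm j), fun j => B (finProdFinEquiv.symm j), f a,
      ?_, ?_⟩
    all_goals {
      have hnet : ∀ x : ℝ, f a + ∑ j : Fin (n*2), W (finProdFinEquiv.symm j) *
          max (x + B (finProdFinEquiv.symm j)) 0 =
          f a + ∑ i : Fin n, s i * min (max (x - (a + (i:ℝ)*h)) 0) h := by
        intro x
        congr 1
        rw [Equiv.sum_comp finProdFinEquiv.symm (fun p => W p * max (x + B p) 0)]
        rw [Fintype.sum_prod_type]
        apply Finset.sum_congr rfl
        intro i _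
        rw [Fin.sum_univ_two]
        have hW0 : W (i, 0) = s i := by norm_num [hWdef]
        have hW1 : W (i, 1) = -(s i) := by norm_num [hWdef]
        have hB0 : B (i, 0) = -(a + (i:ℝ)*h) := by norm_num [hBdef]
        have hB1 : B (i, 1) = -(a + ((i:ℝ)+1)*h) := by norm_num [hBdef]
        rw [hW0, hW1, hB0, hB1]
        have e1 : x + -(a + (i:ℝ)*h) = x - (a + (i:ℝ)*h) := by ring
        have e2 : x + -(a + ((i:ℝ)+1)*h) = (x - (a + (i:ℝ)*h)) - h := by ring
        rw [e1, e2, ← aux_relu_sub (x - (a + (i:ℝ)*h)) h hh.le]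
        ring
      first
      | -- Lipschitz goal
        (rw [show (fun x : ℝ => f a + ∑ j : Fin (n*2), W (finProdFinEquiv.symm j) *
            max (x + B (finProdFinEquiv.symm j)) 0) =
            (fun x : ℝ => f a + ∑ i : Fin n, s i * min (max (x - (a + (i:ℝ)*h)) 0) h)
            from funext hnet]
         exact g_lipschitz a h hh.le n s hs1 (f a))
      | -- approximation goal
        (intro x hx
         rw [hnet x]
         obtain ⟨hxa, hxb⟩ := hx
         set K : ℤ := ⌊(x-a)/h⌋ with hKdef
         have hK0 : 0 ≤ K := Int.floor_nonneg.mpr (div_nonneg (by linarith) hh.le)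
         set k : ℕ := K.toNat with hkdef
         have hkK : (k:ℝ) = (K:ℝ) := by exact_mod_cast Int.toNat_of_nonneg hK0
         have hk1 : (k:ℝ) * h ≤ x - a := by
           have := Int.floor_le ((x-a)/h)
           rw [← hKdef] at this
           rw [hkK]
           exact (le_div_iff₀ hh).mp this
         have hk2 : x - a < ((k:ℝ)+1) * h := by
           have := Int.lt_floor_add_one ((x-a)/h)
           rw [← hKdef] at this
           rw [hkK]
           exact (div_lt_iff₀ hh).mp this
         have hkn : k ≤ n := by
           have hxn : (x-a)/h ≤ (n:ℝ) := by
             rw [div_le_iff₀ hh, hdef]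
             have : (n:ℝ) * ((b-a)/n) = b - a := by field_simp
             rw [this]; linarith
           have : (K:ℝ) ≤ (n:ℝ) := le_trans (Int.floor_le _) hxn
           exact_mod_cast hkK ▸ this
         have hgk := g_interp a h hh n f k hkn
         have hglip := g_lipschitz a h hh.le n s hs1 (f a)
         set g : ℝ → ℝ := fun t => f a + ∑ i : Fin n, s i * min (max (t - (a + (i:ℝ)*h)) 0) h
           with hgdef
         have hgk' : g (a + (k:ℝ)*h) = f (a + (k:ℝ)*h) := hgk
         have hfx : |f x - f (a + (k:ℝ)*h)| ≤ x - (a + (k:ℝ)*h) := by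
           have := hf.dist_le_mul x (a + (k:ℝ)*h)
           rw [Real.dist_eq, Real.dist_eq, NNReal.coe_one, one_mul] at this
           refine le_trans this ?_
           rw [abs_of_nonneg (by linarith)]
         have hgx : |g (a + (k:ℝ)*h) - g x| ≤ x - (a + (k:ℝ)*h) := by
           have := hglip.dist_le_mul (a + (k:ℝ)*h) x
           rw [Real.dist_eq, Real.dist_eq, NNReal.coe_one, one_mul] at this
           refine le_trans this ?_
           rw [abs_sub_comm, abs_of_nonneg (by linarith)]
         have hcomb : |f x - g x| ≤ 2 * (x - (a + (k:ℝ)*h)) := by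
           have : f x - g x = (f x - f (a + (k:ℝ)*h)) + (g (a + (k:ℝ)*h) - g x) := by
             rw [hgk']; ring
           rw [this]
           calc |(f x - f (a + (k:ℝ)*h)) + (g (a + (k:ℝ)*h) - g x)|
               ≤ |f x - f (a + (k:ℝ)*h)| + |g (a + (k:ℝ)*h) - g x| := abs_add_le _ _
             _ ≤ 2 * (x - (a + (k:ℝ)*h)) := by linarith
         calc |f x - g x| ≤ 2 * (x - (a + (k:ℝ)*h)) := hcomb
           _ ≤ 2 * h := by nlinarith
           _ ≤ ε := h2eps)
    }
end

section
/- Let f : ℝ → ℝ be 1-Lipschitz and let [a,b] be a compact interval. For every ε > 0 there exist H ∈ ℕ and parameters w₁, w₂, b₁ ∈ ℝ^H, b₂ ∈ ℝ such that the function ĥ(x) = b₂ + Σᵢ w₂ᵢ·FELU(w₁ᵢ·x + b₁ᵢ) is 1-Lipschitz and satisfies sup_{x ∈ [a,b]} |f(x) - ĥ(x)| ≤ ε. -/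
noncomputable def felu' (x : ℝ) : ℝ := max 0 (min (x + 1) 1)

lemma felu'_mono : Monotone felu' := fun u v huv =>
  max_le_max le_rfl (min_le_min (by linarith) le_rfl)

lemma felu'_nonneg (x : ℝ) : 0 ≤ felu' x := le_max_left _ _

lemma felu'_le_one (x : ℝ) : felu' x ≤ 1 :=
  max_le (by norm_num) (min_le_right _ _)

lemma hasDerivAt_quad (x : ℝ) : HasDerivAt (fun y : ℝ => (y + 1) ^ 2 / 2 - 1 / 2) (x + 1) x := by
  have h1 : HasDerivAt (fun y : ℝ => (y + 1) ^ 2) (2 * (x + 1)) x := by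
    simpa using (((hasDerivAt_id x).add_const 1).fun_pow 2)
  have := (h1.div_const 2).sub_const (1 / 2)
  rw [show x + 1 = 2 * (x + 1) / 2 by ring]
  exact this

lemma FELU_eq_quad {y : ℝ} (h1 : -1 ≤ y) (h2 : y ≤ 0) :
    FELU y = (y + 1) ^ 2 / 2 - 1 / 2 := by
  simp only [FELU]
  rw [if_neg (by linarith), if_pos h1]

lemma hasDerivAt_FELU (x : ℝ) : HasDerivAt FELU (felu' x) x := by
  rcases lt_trichotomy x 0 with hx | hx | hx
  · rcases lt_trichotomy x (-1) with hx1 | hx1 | hx1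
    · -- x < -1 : constant
      have h : felu' x = 0 := by
        simp only [felu', max_eq_left_iff]
        exact min_le_of_left_le (by linarith)
      rw [h]
      have he : FELU =ᶠ[nhds x] fun _ => -(1 / 2 : ℝ) := by
        filter_upwards [eventually_lt_nhds hx1] with y hy
        simp only [FELU]
        rw [if_neg (by linarith), if_neg (by linarith)]
      exact (hasDerivAt_const x _).congr_of_eventuallyEq he
    · -- x = -1 : junction
      subst hx1
      have h : felu' (-1) = 0 := by norm_num [felu']
      rw [h]
      have hle : HasDerivWithinAt FELU 0 (Set.Iic (-1)) (-1) := by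
        have : ∀ y ∈ Set.Iic (-1 : ℝ), FELU y = -(1 / 2) := by
          intro y hy
          rcases eq_or_lt_of_le (Set.mem_Iic.mp hy) with h | h
          · rw [h, FELU_eq_quad (by norm_num) (by norm_num)]; norm_num
          · simp only [FELU]; rw [if_neg (by linarith), if_neg (by linarith)]
        exact ((hasDerivWithinAt_const (-1 : ℝ) _ (-(1 / 2 : ℝ)))).congr this
          (this _ (by norm_num))
      have hge : HasDerivWithinAt FELU 0 (Set.Ici (-1)) (-1) := by
        have hq : HasDerivWithinAt (fun y : ℝ => (y + 1) ^ 2 / 2 - 1 / 2) 0 (Set.Ici (-1)) (-1) := by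
          have := (hasDerivAt_quad (-1)).hasDerivWithinAt (s := Set.Ici (-1))
          simpa using this
        refine hq.congr_of_eventuallyEq ?_ (by rw [FELU_eq_quad] <;> norm_num)
        filter_upwards [self_mem_nhdsWithin,
          ((eventually_lt_nhds (show (-1 : ℝ) < 0 by norm_num)).filter_mono nhdsWithin_le_nhds)]
          with y hy1 hy2
        exact FELU_eq_quad hy1 hy2.le
      have := hle.union hge
      rwa [Set.Iic_union_Ici, hasDerivWithinAt_univ] at this
    · -- -1 < x < 0 : quadratic
      have h : felu' x = x + 1 := by
        simp only [felu']
        rw [min_eq_left (by linarith), max_eq_right (by linarith)]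
      rw [h]
      refine (hasDerivAt_quad x).congr_of_eventuallyEq ?_
      filter_upwards [eventually_gt_nhds hx1, eventually_lt_nhds hx] with y h1 h2
      exact FELU_eq_quad h1.le h2.le
  · -- x = 0 : junction
    subst hx
    have h : felu' 0 = 1 := by norm_num [felu']
    rw [h]
    have hle : HasDerivWithinAt FELU 1 (Set.Iic 0) 0 := by
      have hq : HasDerivWithinAt (fun y : ℝ => (y + 1) ^ 2 / 2 - 1 / 2) 1 (Set.Iic 0) 0 := by
        have := (hasDerivAt_quad 0).hasDerivWithinAt (s := Set.Iic 0)
        simpa using this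
      refine hq.congr_of_eventuallyEq ?_ (by rw [FELU_eq_quad] <;> norm_num)
      filter_upwards [self_mem_nhdsWithin,
        ((eventually_gt_nhds (show (-1 : ℝ) < 0 by norm_num)).filter_mono nhdsWithin_le_nhds)]
        with y hy1 hy2
      exact FELU_eq_quad hy2.le hy1
    have hge : HasDerivWithinAt FELU 1 (Set.Ici 0) 0 := by
      have : ∀ y ∈ Set.Ici (0 : ℝ), FELU y = y := by
        intro y hy
        rcases eq_or_lt_of_le (Set.mem_Ici.mp hy) with h | h
        · rw [← h, FELU_eq_quad (by norm_num) (by norm_num)]; norm_num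
        · simp [FELU, h]
      exact ((hasDerivAt_id (0:ℝ)).hasDerivWithinAt (s := Set.Ici 0)).congr this (this _ (by norm_num))
    have := hle.union hge
    rwa [Set.Iic_union_Ici, hasDerivWithinAt_univ] at this
  · -- x > 0
    have h : felu' x = 1 := by
      simp only [felu']
      rw [min_eq_right (by linarith), max_eq_right (by norm_num)]
    rw [h]
    have he : FELU =ᶠ[nhds x] id := by
      filter_upwards [eventually_gt_nhds hx] with y hy
      simp [FELU, hy]
    exact (hasDerivAt_id x).congr_of_eventuallyEq he

lemma FELU_mono : Monotone FELU := by
  apply monotone_of_deriv_nonneg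
  · exact fun x => (hasDerivAt_FELU x).differentiableAt
  · intro x
    rw [(hasDerivAt_FELU x).deriv]
    exact felu'_nonneg x

lemma FELU_sub_le {x y : ℝ} (h : x ≤ y) : FELU y - FELU x ≤ y - x := by
  have hm : Monotone (fun t => t - FELU t) := by
    apply monotone_of_deriv_nonneg
    · exact fun t => (differentiable_id t).sub (hasDerivAt_FELU t).differentiableAt
    · intro t
      have : HasDerivAt (fun t => t - FELU t) (1 - felu' t) t :=
        (hasDerivAt_id t).sub (hasDerivAt_FELU t)
      rw [this.deriv]
      linarith [felu'_le_one t]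
  have := hm h
  simp only at this
  linarith

lemma FELU_incr_mono {x y u v : ℝ} (hxy : x ≤ y) (huv : u ≤ v) :
    FELU (y + u) - FELU (x + u) ≤ FELU (y + v) - FELU (x + v) := by
  have hm : Monotone (fun t => FELU (y + t) - FELU (x + t)) := by
    apply monotone_of_deriv_nonneg
    · intro t
      have h1 : HasDerivAt (fun t => FELU (y + t) - FELU (x + t))
          (felu' (y + t) * 1 - felu' (x + t) * 1) t := by
        exact ((hasDerivAt_FELU (y+t)).comp t ((hasDerivAt_id t).const_add y)).sub
          (((hasDerivAt_FELU (x+t)).comp t ((hasDerivAt_id t).const_add x)))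
      exact h1.differentiableAt
    · intro t
      have h1 : HasDerivAt (fun t => FELU (y + t) - FELU (x + t))
          (felu' (y + t) * 1 - felu' (x + t) * 1) t := by
        exact ((hasDerivAt_FELU (y+t)).comp t ((hasDerivAt_id t).const_add y)).sub
          (((hasDerivAt_FELU (x+t)).comp t ((hasDerivAt_id t).const_add x)))
      rw [h1.deriv]
      have := felu'_mono (by linarith : x + t ≤ y + t)
      linarith
  exact hm huv

lemma FELU_near_relu (x : ℝ) : |FELU x - max x 0| ≤ 1 / 2 := by
  simp only [FELU]
  rcases lt_trichotomy x 0 with hx | hx | hx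
  · rw [if_neg (by linarith), max_eq_right hx.le]
    by_cases h1 : -1 ≤ x
    · rw [if_pos h1, abs_le]; constructor <;> nlinarith
    · rw [if_neg h1, abs_le]; norm_num
  · subst hx; norm_num
  · rw [if_pos hx, max_eq_left hx.le]; norm_num

open Finset in
lemma abel_id (s θ : ℕ → ℝ) (n : ℕ) :
    ∑ i ∈ range n, (s (i + 1) - s i) * θ i
      = ∑ i ∈ range n, s (i + 1) * (θ i - θ (i + 1)) + s n * θ n - s 0 * θ 0 := by
  induction n with
  | zero => simp
  | succ m ih =>
    rw [Finset.sum_range_succ, Finset.sum_range_succ, ih]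
    ring

open Finset in
lemma abel_bound (s θ : ℕ → ℝ) (n : ℕ) (hs0 : s 0 = 0) (hs : ∀ k, |s k| ≤ 1)
    (hθa : ∀ i, θ (i + 1) ≤ θ i) (hθ0 : ∀ i, 0 ≤ θ i) :
    |∑ i ∈ range n, (s (i + 1) - s i) * θ i| ≤ θ 0 := by
  have hterm : ∀ i : ℕ, |s (i + 1) * (θ i - θ (i + 1))| ≤ θ i - θ (i + 1) := by
    intro i
    rw [abs_mul, abs_of_nonneg (sub_nonneg.2 (hθa i))]
    exact mul_le_of_le_one_left (by linarith [hθa i]) (hs _)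
  have hlast : |s n * θ n| ≤ θ n := by
    rw [abs_mul, abs_of_nonneg (hθ0 n)]
    exact mul_le_of_le_one_left (hθ0 n) (hs _)
  rw [abel_id, hs0, zero_mul, sub_zero]
  calc |∑ i ∈ range n, s (i + 1) * (θ i - θ (i + 1)) + s n * θ n|
      ≤ |∑ i ∈ range n, s (i + 1) * (θ i - θ (i + 1))| + |s n * θ n| := abs_add_le _ _
    _ ≤ (∑ i ∈ range n, |s (i + 1) * (θ i - θ (i + 1))|) + |s n * θ n| := by
        gcongr
        exact Finset.abs_sum_le_sum_abs _ _
    _ ≤ (∑ i ∈ range n, (θ i - θ (i + 1))) + θ n := by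
        exact add_le_add (Finset.sum_le_sum fun i _ => hterm i) hlast
    _ = θ 0 - θ n + θ n := by rw [Finset.sum_range_sub' θ n]
    _ = θ 0 := by ring

theorem felu_universal_lipschitz (f : ℝ → ℝ) (hf : LipschitzWith 1 f) (a b : ℝ) (hab : a ≤ b) :
    ∀ ε > (0 : ℝ), ∃ (H : ℕ) (w₁ w₂ b₁ : Fin H → ℝ) (b₂ : ℝ),
      LipschitzWith 1 (fun x => b₂ + ∑ i, w₂ i * FELU (w₁ i * x + b₁ i)) ∧
      ∀ x ∈ Set.Icc a b, |f x - (b₂ + ∑ i, w₂ i * FELU (w₁ i * x + b₁ i))| ≤ ε := by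
  intro ε hε
  have hfl : ∀ u v : ℝ, |f u - f v| ≤ |u - v| := by
    intro u v
    have := hf.dist_le_mul u v
    simpa [Real.dist_eq] using this
  rcases eq_or_lt_of_le hab with heq | hlt
  · -- degenerate interval
    refine ⟨0, fun i => 0, fun i => 0, fun i => 0, f a, ?_, ?_⟩
    · simp only [Finset.univ_eq_empty, Finset.sum_empty, add_zero]
      exact (LipschitzWith.const (f a)).weaken (zero_le_one)
    · intro x hx
      rw [← heq] at hx
      have : x = a := le_antisymm hx.2 hx.1
      simp [this]
      linarith
  -- main case
  have hba : (0 : ℝ) < b - a := sub_pos.2 hlt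
  set n : ℕ := ⌈4 * (b - a) / ε⌉₊ with hn
  have hn0 : 0 < n := Nat.ceil_pos.2 (div_pos (by linarith) hε)
  have hnR : (0 : ℝ) < n := by exact_mod_cast hn0
  have hnge : 4 * (b - a) / ε ≤ n := Nat.le_ceil _
  set δ : ℝ := (b - a) / n with hδdef
  have hδ : 0 < δ := div_pos hba hnR
  set lam : ℝ := ε / (2 * n) with hlamdef
  have hlam : 0 < lam := div_pos hε (by linarith)
  set X : ℕ → ℝ := fun k => a + k * δ with hXdef
  set s : ℕ → ℝ := fun k => if k = 0 then 0 else (f (X k) - f (X (k - 1))) / δ with hsdef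
  have hX : ∀ k : ℕ, X (k + 1) = X k + δ := by
    intro k
    simp only [hXdef]
    push_cast
    ring
  have hXmono : ∀ {i j : ℕ}, i ≤ j → X i ≤ X j := by
    intro i j hij
    simp only [hXdef]
    have h1 : (i : ℝ) ≤ j := by exact_mod_cast hij
    nlinarith
  have hs0 : s 0 = 0 := by simp [hsdef]
  have hsd : ∀ k : ℕ, s (k + 1) * δ = f (X (k + 1)) - f (X k) := by
    intro k
    simp only [hsdef, Nat.add_sub_cancel, if_neg (Nat.succ_ne_zero k)]
    field_simp
  have hsk : ∀ k : ℕ, |s k| ≤ 1 := by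
    intro k
    cases k with
    | zero => simp [hs0]
    | succ j =>
      have h1 : |s (j + 1) * δ| ≤ δ := by
        rw [hsd j]
        calc |f (X (j + 1)) - f (X j)| ≤ |X (j + 1) - X j| := hfl _ _
          _ = δ := by rw [hX j, abs_of_nonneg (by linarith)]; ring_nf
      rw [abs_mul, abs_of_pos hδ] at h1
      calc |s (j+1)| = |s (j+1)| * δ / δ := by field_simp
        _ ≤ δ / δ := by gcongr
        _ = 1 := by field_simp
  have harg : ∀ (i : ℕ) (x : ℝ), (1 / lam) * x + (-(X i) / lam) = (x - X i) / lam := by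
    intro i x
    field_simp
    ring
  have hrep : ∀ x : ℝ, (∑ i : Fin n,
      (lam * (s ((i : ℕ) + 1) - s (i : ℕ))) * FELU ((1 / lam) * x + (-(X (i : ℕ)) / lam)))
      = ∑ i ∈ Finset.range n, (s (i + 1) - s i) * (lam * FELU ((x - X i) / lam)) := by
    intro x
    rw [Fin.sum_univ_eq_sum_range
      (fun j => (lam * (s (j + 1) - s j)) * FELU ((1 / lam) * x + (-(X j) / lam))) n]
    refine Finset.sum_congr rfl fun i _ => ?_
    rw [harg]
    ring
  refine ⟨n, fun _ => 1 / lam, fun i => lam * (s ((i : ℕ) + 1) - s (i : ℕ)),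
      fun i => -(X (i : ℕ)) / lam, f a, ?_, ?_⟩
  · -- Lipschitz goal
    apply LipschitzWith.of_dist_le_mul
    intro x y
    simp only [Real.dist_eq, NNReal.coe_one, one_mul]
    have key : ∀ x y : ℝ, y ≤ x →
        |(f a + ∑ i ∈ Finset.range n, (s (i + 1) - s i) * (lam * FELU ((x - X i) / lam))) -
         (f a + ∑ i ∈ Finset.range n, (s (i + 1) - s i) * (lam * FELU ((y - X i) / lam)))|
          ≤ x - y := by
      intro x y hyx
      set θ : ℕ → ℝ := fun i => lam * (FELU ((x - X i) / lam) - FELU ((y - X i) / lam)) with hθdef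
      have hdiff : (f a + ∑ i ∈ Finset.range n, (s (i + 1) - s i) * (lam * FELU ((x - X i) / lam))) -
          (f a + ∑ i ∈ Finset.range n, (s (i + 1) - s i) * (lam * FELU ((y - X i) / lam)))
          = ∑ i ∈ Finset.range n, (s (i + 1) - s i) * θ i := by
        have h0 : (f a + ∑ i ∈ Finset.range n, (s (i + 1) - s i) * (lam * FELU ((x - X i) / lam))) -
            (f a + ∑ i ∈ Finset.range n, (s (i + 1) - s i) * (lam * FELU ((y - X i) / lam)))
            = (∑ i ∈ Finset.range n, (s (i + 1) - s i) * (lam * FELU ((x - X i) / lam))) -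
              (∑ i ∈ Finset.range n, (s (i + 1) - s i) * (lam * FELU ((y - X i) / lam))) := by ring
        rw [h0, ← Finset.sum_sub_distrib]
        exact Finset.sum_congr rfl fun i _ => by simp only [hθdef]; ring
      rw [hdiff]
      have hθa : ∀ i, θ (i + 1) ≤ θ i := by
        intro i
        simp only [hθdef]
        have hpq : (y - X (i + 1)) / lam ≤ (x - X (i + 1)) / lam := by gcongr
        have huv : (0 : ℝ) ≤ δ / lam := div_nonneg hδ.le hlam.le
        have h2 := FELU_incr_mono hpq huv
        have e1 : (x - X (i + 1)) / lam + δ / lam = (x - X i) / lam := by rw [hX i]; ring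
        have e2 : (y - X (i + 1)) / lam + δ / lam = (y - X i) / lam := by rw [hX i]; ring
        rw [e1, e2] at h2
        simp only [add_zero] at h2
        exact mul_le_mul_of_nonneg_left h2 hlam.le
      have hθ0 : ∀ i, 0 ≤ θ i := by
        intro i
        simp only [hθdef]
        have h3 : FELU ((y - X i) / lam) ≤ FELU ((x - X i) / lam) :=
          FELU_mono (by gcongr)
        exact mul_nonneg hlam.le (by linarith)
      have hb := abel_bound s θ n hs0 hsk hθa hθ0
      refine hb.trans ?_
      simp only [hθdef]
      have h1 : FELU ((x - X 0) / lam) - FELU ((y - X 0) / lam)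
          ≤ (x - X 0) / lam - (y - X 0) / lam := FELU_sub_le (by gcongr)
      have h2 : (x - X 0) / lam - (y - X 0) / lam = (x - y) / lam := by ring
      rw [h2] at h1
      calc lam * (FELU ((x - X 0) / lam) - FELU ((y - X 0) / lam)) ≤ lam * ((x - y) / lam) :=
            mul_le_mul_of_nonneg_left h1 hlam.le
        _ = x - y := by field_simp
    rw [hrep x, hrep y]
    rcases le_total y x with h | h
    · rw [abs_of_nonneg (sub_nonneg.2 h)]
      exact key x y h
    · have h5 := key y x h
      rw [abs_sub_comm] at h5
      calc _ ≤ y - x := h5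
        _ ≤ |x - y| := by rw [abs_sub_comm, abs_of_nonneg (sub_nonneg.2 h)]
  · -- approximation goal
    intro x hx
    simp only []
    rw [hrep x]
    set k := min (n - 1) ⌊(x - a) / δ⌋₊ with hkdef
    have hxa : 0 ≤ (x - a) / δ := div_nonneg (by linarith [hx.1]) hδ.le
    have hk1n : k + 1 ≤ n := by
      have := min_le_left (n - 1) ⌊(x - a) / δ⌋₊
      omega
    have hXkx : X k ≤ x := by
      have h1 : (k : ℝ) ≤ (x - a) / δ := by
        calc (k : ℝ) ≤ (⌊(x - a) / δ⌋₊ : ℝ) := by exact_mod_cast min_le_right _ _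
          _ ≤ (x - a) / δ := Nat.floor_le hxa
      have h2 : (k : ℝ) * δ ≤ x - a := (le_div_iff₀ hδ).mp h1
      simp only [hXdef]
      linarith
    have hxXk1 : x ≤ X (k + 1) := by
      rcases le_or_gt (⌊(x - a) / δ⌋₊) (n - 1) with hc | hc
      · have hkf : k = ⌊(x - a) / δ⌋₊ := min_eq_right hc
        have h2 : (x - a) / δ < ⌊(x - a) / δ⌋₊ + 1 := Nat.lt_floor_add_one _
        have h3 : x - a < ((⌊(x - a) / δ⌋₊ : ℝ) + 1) * δ := (div_lt_iff₀ hδ).mp h2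
        rw [hkf]
        simp only [hXdef]
        push_cast
        linarith
      · have hkf : k = n - 1 := min_eq_left hc.le
        have hkn : k + 1 = n := by omega
        have hXn : X n = b := by
          simp only [hXdef, hδdef]
          field_simp
          ring
        rw [hkn, hXn]
        exact hx.2
    have hgap0 : 0 ≤ X (k + 1) - x := by linarith
    have hgap1 : X (k + 1) - x ≤ δ := by
      have := hX k
      linarith
    have hlin : ∀ m : ℕ, ∑ i ∈ Finset.range m, (s (i + 1) - s i) * (x - X i)
        = s m * (x - X m) + (f (X m) - f a) := by
      intro m
      induction m with
      | zero =>
        have hX0 : X 0 = a := by simp [hXdef]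
        simp [hs0, hX0]
      | succ m ih =>
        rw [Finset.sum_range_succ, ih]
        linear_combination hsd m + s (m + 1) * hX m
    have hsplit : ∑ i ∈ Finset.range n, (s (i + 1) - s i) * max (x - X i) 0
        = ∑ i ∈ Finset.range (k + 1), (s (i + 1) - s i) * (x - X i) := by
      have h1 : ∑ i ∈ Finset.range (k + 1), (s (i + 1) - s i) * max (x - X i) 0
          = ∑ i ∈ Finset.range n, (s (i + 1) - s i) * max (x - X i) 0 := by
        refine Finset.sum_subset (Finset.range_subset_range.2 hk1n) fun i hi hni => ?_
        have hik : k + 1 ≤ i := by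
          simp only [Finset.mem_range, not_lt] at hni
          exact hni
        have hxi : x ≤ X i := le_trans hxXk1 (hXmono hik)
        rw [max_eq_right (sub_nonpos.2 hxi), mul_zero]
      rw [← h1]
      refine Finset.sum_congr rfl fun i hi => ?_
      have hik : i ≤ k := Nat.lt_succ_iff.1 (Finset.mem_range.1 hi)
      rw [max_eq_left (sub_nonneg.2 (le_trans (hXmono hik) hXkx))]
    set R : ℝ := f a + ∑ i ∈ Finset.range n, (s (i + 1) - s i) * max (x - X i) 0 with hRdef
    have hRval : R = f (X (k + 1)) + s (k + 1) * (x - X (k + 1)) := by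
      rw [hRdef, hsplit, hlin (k + 1)]
      ring
    have habsx : |x - X (k + 1)| ≤ δ := by
      rw [abs_sub_comm, abs_of_nonneg hgap0]
      exact hgap1
    have hfR : |f x - R| ≤ 2 * δ := by
      rw [hRval]
      calc |f x - (f (X (k + 1)) + s (k + 1) * (x - X (k + 1)))|
          = |(f x - f (X (k + 1))) - s (k + 1) * (x - X (k + 1))| := by ring_nf
        _ ≤ |f x - f (X (k + 1))| + |s (k + 1) * (x - X (k + 1))| := abs_sub _ _
        _ ≤ |x - X (k + 1)| + |s (k + 1)| * |x - X (k + 1)| := by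
            rw [abs_mul]
            exact add_le_add (hfl _ _) le_rfl
        _ ≤ δ + 1 * δ := by
            refine add_le_add habsx ?_
            exact mul_le_mul (hsk _) habsx (abs_nonneg _) zero_le_one
        _ = 2 * δ := by ring
    have hterm2 : ∀ i : ℕ, |(s (i + 1) - s i) * max (x - X i) 0
        - (s (i + 1) - s i) * (lam * FELU ((x - X i) / lam))| ≤ lam := by
      intro i
      have hmax : max (x - X i) 0 = lam * max ((x - X i) / lam) 0 := by
        rcases le_total (x - X i) 0 with h | h
        · have h' : (x - X i) / lam ≤ 0 := div_nonpos_of_nonpos_of_nonneg h hlam.le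
          rw [max_eq_right h, max_eq_right h', mul_zero]
        · rw [max_eq_left h, max_eq_left (div_nonneg h hlam.le)]
          field_simp
      have h6 : (s (i + 1) - s i) * max (x - X i) 0
          - (s (i + 1) - s i) * (lam * FELU ((x - X i) / lam))
          = ((s (i + 1) - s i) * lam) * (max ((x - X i) / lam) 0 - FELU ((x - X i) / lam)) := by
        rw [hmax]; ring
      rw [h6, abs_mul, abs_mul, abs_of_pos hlam]
      have h7 : |max ((x - X i) / lam) 0 - FELU ((x - X i) / lam)| ≤ 1 / 2 := by
        rw [abs_sub_comm]
        exact FELU_near_relu _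
      have h8 : |s (i + 1) - s i| ≤ 2 := by
        calc |s (i + 1) - s i| ≤ |s (i + 1)| + |s i| := abs_sub _ _
          _ ≤ 1 + 1 := add_le_add (hsk _) (hsk _)
          _ = 2 := by norm_num
      calc |s (i + 1) - s i| * lam * |max ((x - X i) / lam) 0 - FELU ((x - X i) / lam)|
          ≤ 2 * lam * (1 / 2) := by
            refine mul_le_mul ?_ h7 (abs_nonneg _) (by positivity)
            exact mul_le_mul_of_nonneg_right h8 hlam.le
        _ = lam := by ring
    have hRh : |R - (f a + ∑ i ∈ Finset.range n, (s (i + 1) - s i) * (lam * FELU ((x - X i) / lam)))|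
        ≤ n * lam := by
      have h0 : R - (f a + ∑ i ∈ Finset.range n, (s (i + 1) - s i) * (lam * FELU ((x - X i) / lam)))
          = ∑ i ∈ Finset.range n, ((s (i + 1) - s i) * max (x - X i) 0
            - (s (i + 1) - s i) * (lam * FELU ((x - X i) / lam))) := by
        rw [hRdef, Finset.sum_sub_distrib]
        ring
      rw [h0]
      calc |∑ i ∈ Finset.range n, ((s (i + 1) - s i) * max (x - X i) 0
            - (s (i + 1) - s i) * (lam * FELU ((x - X i) / lam)))|
          ≤ ∑ i ∈ Finset.range n, |(s (i + 1) - s i) * max (x - X i) 0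
            - (s (i + 1) - s i) * (lam * FELU ((x - X i) / lam))| := Finset.abs_sum_le_sum_abs _ _
        _ ≤ ∑ _i ∈ Finset.range n, lam := Finset.sum_le_sum fun i _ => hterm2 i
        _ = n * lam := by rw [Finset.sum_const, Finset.card_range, nsmul_eq_mul]
    have hnl : (n : ℝ) * lam = ε / 2 := by
      rw [hlamdef]
      field_simp
    have h4 : 4 * (b - a) ≤ n * ε := (div_le_iff₀ hε).mp hnge
    have h5 : 4 * δ ≤ ε := by
      rw [hδdef, ← mul_div_assoc, div_le_iff₀ hnR]
      linarith
    calc |f x - (f a + ∑ i ∈ Finset.range n, (s (i + 1) - s i) * (lam * FELU ((x - X i) / lam)))|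
        ≤ |f x - R| + |R - (f a + ∑ i ∈ Finset.range n,
            (s (i + 1) - s i) * (lam * FELU ((x - X i) / lam)))| := by
          have := abs_sub_le (f x) R (f a + ∑ i ∈ Finset.range n,
            (s (i + 1) - s i) * (lam * FELU ((x - X i) / lam)))
          exact this
      _ ≤ 2 * δ + n * lam := add_le_add hfR hRh
      _ ≤ ε / 2 + ε / 2 := by rw [hnl]; linarith
      _ = ε := by ring
end
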